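/- arXiv:0802.2019 — 5 statements merged into one kernel-verified Lean document; each statement's English description precedes it below -/
import Mathlib

section
/- If ρ is a separable density operator on ℂ^{N_A} ⊗ ℂ^{N_B}, i.e. ρ = ∑_i p_i ρ_i^A ⊗ ρ_i^B with p_i ≥ 0, ∑ p_i = 1 and ρ_i^A, ρ_i^B density operators, then the trace norm of the realigned matrix ρ^R satisfies ‖ρ^R‖_tr ≤ 1. -/
open Matrix Kronecker
open scoped ComplexOrder

/-- The realignment of a bipartite matrix: `ρ^R_{(mn)(μν)} := ρ_{(mμ)(nν)}`. -/
def realign {NA NB : ℕ} (ρ : Matrix (Fin NA × Fin NB) (Fin NA × Fin NB) ℂ) :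
    Matrix (Fin NA × Fin NA) (Fin NB × Fin NB) ℂ :=
  Matrix.of fun p q => ρ (p.1, q.1) (p.2, q.2)

/-- The trace norm of a (rectangular) complex matrix: the sum of its singular values,
i.e. of the square roots of the eigenvalues of `AᴴA`. -/
noncomputable def traceNorm {m n : ℕ} (A : Matrix (Fin m × Fin m) (Fin n × Fin n) ℂ) : ℝ :=
  ∑ j, Real.sqrt ((Matrix.posSemidef_conjTranspose_mul_self A).1.eigenvalues j)

set_option maxHeartbeats 1000000



lemma parseval_dot {ι : Type*} [Fintype ι]
    (e : OrthonormalBasis ι ℂ (EuclideanSpace ℂ ι)) (c : ι → ℂ) :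
    ∑ j, ‖c ⬝ᵥ ⇑(e j)‖ ^ 2 = ∑ q, ‖c q‖ ^ 2 := by
  set w : EuclideanSpace ℂ ι := (WithLp.equiv 2 (ι → ℂ)).symm (star c) with hw
  have hin : ∀ j, (inner ℂ w (e j) : ℂ) = c ⬝ᵥ ⇑(e j) := by
    intro j
    rw [EuclideanSpace.inner_eq_star_dotProduct]
    simp [hw, dotProduct, mul_comm]
  have hpar := e.sum_inner_mul_inner w w
  have h1 : ∀ j, (inner ℂ w (e j) : ℂ) * inner ℂ (e j) w = ((‖c ⬝ᵥ ⇑(e j)‖ ^ 2 : ℝ) : ℂ) := by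
    intro j
    rw [← inner_conj_symm w (e j), RCLike.conj_mul, ← hin j, norm_inner_symm]
    norm_cast
  simp_rw [h1] at hpar
  rw [inner_self_eq_norm_sq_to_K] at hpar
  norm_cast at hpar
  have hw2 : ‖w‖ ^ 2 = ∑ q, ‖c q‖ ^ 2 := by
    rw [EuclideanSpace.norm_eq, Real.sq_sqrt (by positivity)]
    simp [hw]
  exact_mod_cast hpar.trans (congrArg Complex.ofReal hw2)


lemma inner_piLp_equiv_symm_aux {ι : Type*} [Fintype ι] (x y : ι → ℂ) :
    inner ℂ ((WithLp.equiv 2 (ι → ℂ)).symm x : EuclideanSpace ℂ ι) ((WithLp.equiv 2 (ι → ℂ)).symm y)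
      = dotProduct (star x) y :=
  (EuclideanSpace.inner_toLp_toLp x y).trans (dotProduct_comm _ _)


lemma traceNorm_mul_le {m n : ℕ} {k : Type*} [Fintype k]
    (B : Matrix (Fin m × Fin m) k ℂ) (C : Matrix k (Fin n × Fin n) ℂ) :
    traceNorm (B * C) ≤
      Real.sqrt (∑ q, ∑ i, ‖B q i‖ ^ 2) * Real.sqrt (∑ i, ∑ q, ‖C i q‖ ^ 2) := by
  classical
  set M : Matrix (Fin m × Fin m) (Fin n × Fin n) ℂ := B * C with hM
  set hH := (Matrix.posSemidef_conjTranspose_mul_self M).1 with hHdef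
  set lam : Fin n × Fin n → ℝ := hH.eigenvalues with hlam
  have hlam0 : ∀ j, 0 ≤ lam j :=
    (Matrix.posSemidef_conjTranspose_mul_self M).eigenvalues_nonneg
  set e := hH.eigenvectorBasis with he
  set v : Fin n × Fin n → ((Fin n × Fin n) → ℂ) := fun j => ⇑(e j) with hv
  -- basic eigen computation
  have hMv2 : ∀ j l, star (M *ᵥ v j) ⬝ᵥ (M *ᵥ v l)
      = (lam l : ℂ) * (if j = l then 1 else 0) := by
    intro j l
    have : star (M *ᵥ v j) ⬝ᵥ (M *ᵥ v l) = star (v j) ⬝ᵥ ((Mᴴ * M) *ᵥ v l) := by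
      rw [star_mulVec, dotProduct_mulVec, vecMul_vecMul, ← dotProduct_mulVec]
    rw [this, hH.mulVec_eigenvectorBasis]
    have horth := orthonormal_iff_ite.mp e.orthonormal j l
    rw [EuclideanSpace.inner_eq_star_dotProduct] at horth
    have : star (v j) ⬝ᵥ ((lam l) • v l) = (lam l : ℂ) * (star (v j) ⬝ᵥ v l) := by
      have : (lam l) • v l = (lam l : ℂ) • v l := by
        ext q; simp [Complex.real_smul]
      rw [this, dotProduct_smul, smul_eq_mul]
    rw [this]; congr 1; rw [dotProduct_comm]; exact horth
  set u : Fin n × Fin n → ((Fin m × Fin m) → ℂ) :=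
    fun j => ((Real.sqrt (lam j) : ℂ))⁻¹ • (M *ᵥ v j) with hu
  have hu0 : ∀ j, lam j = 0 → u j = 0 := by
    intro j hj; simp [hu, hj]
  -- star u j ⬝ᵥ M v j = sqrt (lam j)
  have hkey : ∀ j, star (u j) ⬝ᵥ (M *ᵥ v j) = (Real.sqrt (lam j) : ℂ) := by
    intro j
    have hstar : star (u j) = ((Real.sqrt (lam j) : ℂ))⁻¹ • star (M *ᵥ v j) := by
      simp [hu, star_smul]
    rw [hstar, smul_dotProduct, hMv2 j j, if_pos rfl, mul_one, smul_eq_mul]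
    rcases eq_or_lt_of_le (hlam0 j) with h | h
    · simp [← h]
    · have hs : Real.sqrt (lam j) ≠ 0 := ne_of_gt (Real.sqrt_pos.mpr h)
      have : (lam j : ℂ) = (Real.sqrt (lam j) : ℂ) * (Real.sqrt (lam j) : ℂ) := by
        rw [← Complex.ofReal_mul, Real.mul_self_sqrt (hlam0 j)]
      rw [this, ← mul_assoc, inv_mul_cancel₀ (by exact_mod_cast hs), one_mul]
  -- rewrite via B, C and Cauchy–Schwarz
  have hcs : ∀ j, Real.sqrt (lam j) ≤
      Real.sqrt (∑ q, ‖(Bᴴ *ᵥ u j) q‖ ^ 2) * Real.sqrt (∑ q, ‖(C *ᵥ v j) q‖ ^ 2) := by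
    intro j
    have h2 : star (u j) ⬝ᵥ (M *ᵥ v j) = star (Bᴴ *ᵥ u j) ⬝ᵥ (C *ᵥ v j) := by
      rw [star_mulVec, conjTranspose_conjTranspose, ← dotProduct_mulVec, mulVec_mulVec, hM]
    have h3 : ‖star (Bᴴ *ᵥ u j) ⬝ᵥ (C *ᵥ v j)‖ ≤
        Real.sqrt (∑ q, ‖(Bᴴ *ᵥ u j) q‖ ^ 2) * Real.sqrt (∑ q, ‖(C *ᵥ v j) q‖ ^ 2) := by
      have h := norm_inner_le_norm (𝕜 := ℂ)
        ((WithLp.equiv 2 _).symm (Bᴴ *ᵥ u j)) ((WithLp.equiv 2 _).symm (C *ᵥ v j))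
      rw [inner_piLp_equiv_symm_aux] at h
      simpa [EuclideanSpace.norm_eq] using h
    calc Real.sqrt (lam j) = ‖star (u j) ⬝ᵥ (M *ᵥ v j)‖ := by
          rw [hkey j, Complex.norm_real, Real.norm_of_nonneg (Real.sqrt_nonneg _)]
      _ ≤ _ := by rw [h2]; exact h3
  -- Parseval: column sums for C
  have hbsum : ∑ j, (∑ q, ‖(C *ᵥ v j) q‖ ^ 2) = ∑ i, ∑ q, ‖C i q‖ ^ 2 := by
    rw [Finset.sum_comm]
    refine Finset.sum_congr rfl fun i _ => ?_
    have : ∀ j, (C *ᵥ v j) i = C i ⬝ᵥ v j := fun _ => rfl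
    simp_rw [this, hv]
    exact parseval_dot e (C i)
  -- orthonormality of the u family on nonzero eigenvalues
  have horthu : Orthonormal ℂ
      (fun j : {j : Fin n × Fin n // lam j ≠ 0} =>
        ((WithLp.equiv 2 ((Fin m × Fin m) → ℂ)).symm (u j.1) :
          EuclideanSpace ℂ (Fin m × Fin m))) := by
    rw [orthonormal_iff_ite]
    intro j l
    rw [inner_piLp_equiv_symm_aux]
    have hstar : star (u j.1) = ((Real.sqrt (lam j.1) : ℂ))⁻¹ • star (M *ᵥ v j.1) := by
      simp [hu, star_smul]
    rw [hstar, hu]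
    simp only [smul_dotProduct, dotProduct_smul, hMv2, smul_eq_mul]
    rcases eq_or_ne j l with rfl | hne
    · rw [if_pos rfl, if_pos rfl, mul_one]
      have hpos : 0 < lam j.1 := lt_of_le_of_ne (hlam0 j.1) (Ne.symm j.2)
      have hs : (Real.sqrt (lam j.1) : ℂ) ≠ 0 := by
        exact_mod_cast ne_of_gt (Real.sqrt_pos.mpr hpos)
      have hl : (lam j.1 : ℂ) = (Real.sqrt (lam j.1) : ℂ) * (Real.sqrt (lam j.1) : ℂ) := by
        rw [← Complex.ofReal_mul, Real.mul_self_sqrt (hlam0 j.1)]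
      field_simp [hl]
      rw [hl, sq]
    · have hne' : j.1 ≠ l.1 := fun h => hne (Subtype.ext h)
      rw [if_neg hne', if_neg hne]
      ring
  -- Bessel: column sums for B
  have hasum : ∑ j, (∑ q, ‖(Bᴴ *ᵥ u j) q‖ ^ 2) ≤ ∑ q, ∑ i, ‖B q i‖ ^ 2 := by
    rw [Finset.sum_comm]
    have percol : ∀ i : k, ∑ j, ‖(Bᴴ *ᵥ u j) i‖ ^ 2 ≤ ∑ q, ‖B q i‖ ^ 2 := by
      intro i
      set x : EuclideanSpace ℂ (Fin m × Fin m) :=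
        (WithLp.equiv 2 ((Fin m × Fin m) → ℂ)).symm (fun q => B q i) with hx
      have hb := horthu.sum_inner_products_le (s := Finset.univ) x
      have hxn : ‖x‖ ^ 2 = ∑ q, ‖B q i‖ ^ 2 := by
        rw [EuclideanSpace.norm_eq, Real.sq_sqrt (by positivity)]
        simp [hx]
      have hterm : ∀ j, ‖(Bᴴ *ᵥ u j) i‖ ^ 2
          = ‖(inner ℂ ((WithLp.equiv 2 ((Fin m × Fin m) → ℂ)).symm (u j) :
              EuclideanSpace ℂ (Fin m × Fin m)) x : ℂ)‖ ^ 2 := by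
        intro j
        rw [hx, inner_piLp_equiv_symm_aux]
        have : (Bᴴ *ᵥ u j) i = star (star (u j) ⬝ᵥ (fun q => B q i)) := by
          simp only [Matrix.mulVec, dotProduct, Matrix.conjTranspose_apply, star_sum,
            star_mul', star_star, Pi.star_apply]
          exact Finset.sum_congr rfl fun q _ => mul_comm _ _
        rw [this, norm_star]
      calc ∑ j, ‖(Bᴴ *ᵥ u j) i‖ ^ 2
          = ∑ j ∈ Finset.univ.filter (fun j => lam j ≠ 0), ‖(Bᴴ *ᵥ u j) i‖ ^ 2 := by
            rw [eq_comm]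
            apply Finset.sum_filter_of_ne
            intro j _ hne h0
            rw [hu0 j h0, Matrix.mulVec_zero] at hne
            simp at hne
        _ = ∑ j : {j : Fin n × Fin n // lam j ≠ 0}, ‖(Bᴴ *ᵥ u j.1) i‖ ^ 2 := by
            apply Finset.sum_subtype
            intro j; simp
        _ ≤ ‖x‖ ^ 2 := by
            simp_rw [hterm]
            exact hb
        _ = ∑ q, ‖B q i‖ ^ 2 := hxn
    calc ∑ i : k, ∑ j, ‖(Bᴴ *ᵥ u j) i‖ ^ 2 ≤ ∑ i : k, ∑ q, ‖B q i‖ ^ 2 :=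
          Finset.sum_le_sum fun i _ => percol i
      _ = ∑ q, ∑ i, ‖B q i‖ ^ 2 := Finset.sum_comm
  -- combine
  have h0 : traceNorm M = ∑ j, Real.sqrt (lam j) := rfl
  rw [h0]
  calc ∑ j, Real.sqrt (lam j)
      ≤ ∑ j, Real.sqrt (∑ q, ‖(Bᴴ *ᵥ u j) q‖ ^ 2) * Real.sqrt (∑ q, ‖(C *ᵥ v j) q‖ ^ 2) :=
        Finset.sum_le_sum fun j _ => hcs j
    _ ≤ Real.sqrt (∑ j, (∑ q, ‖(Bᴴ *ᵥ u j) q‖ ^ 2)) *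
        Real.sqrt (∑ j, (∑ q, ‖(C *ᵥ v j) q‖ ^ 2)) :=
        Real.sum_sqrt_mul_sqrt_le _ (fun j => by positivity) (fun j => by positivity)
    _ ≤ Real.sqrt (∑ q, ∑ i, ‖B q i‖ ^ 2) * Real.sqrt (∑ i, ∑ q, ‖C i q‖ ^ 2) := by
        apply mul_le_mul
        · exact Real.sqrt_le_sqrt hasum
        · exact le_of_eq (congrArg Real.sqrt hbsum)
        · exact Real.sqrt_nonneg _
        · exact Real.sqrt_nonneg _


lemma frob_le_one {N : ℕ} {σ : Matrix (Fin N) (Fin N) ℂ} (h : σ.PosSemidef)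
    (ht : σ.trace = 1) : ∑ a, ∑ b, ‖σ a b‖ ^ 2 ≤ 1 := by
  classical
  have hherm := h.1
  have hU : star (hherm.eigenvectorUnitary : Matrix (Fin N) (Fin N) ℂ) *
      (hherm.eigenvectorUnitary : Matrix (Fin N) (Fin N) ℂ) = 1 :=
    Unitary.coe_star_mul_self hherm.eigenvectorUnitary
  have hcancel : ∀ X : Matrix (Fin N) (Fin N) ℂ,
      star (hherm.eigenvectorUnitary : Matrix (Fin N) (Fin N) ℂ) *
        ((hherm.eigenvectorUnitary : Matrix (Fin N) (Fin N) ℂ) * X) = X := by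
    intro X; rw [← mul_assoc, hU, one_mul]
  -- trace σ = ∑ eigenvalues
  have htr : (σ.trace : ℂ) = ∑ j, ((hherm.eigenvalues j : ℂ)) := by
    conv_lhs => rw [hherm.spectral_theorem, Unitary.conjStarAlgAut_apply]
    rw [Matrix.trace_mul_cycle, hU, one_mul, trace_diagonal]
    simp
  have hsum1 : ∑ j, hherm.eigenvalues j = 1 := by
    rw [ht] at htr
    exact_mod_cast htr.symm
  -- trace (σ * σ) = ∑ eigenvalues²
  have hsq : σ * σ = (hherm.eigenvectorUnitary : Matrix (Fin N) (Fin N) ℂ) *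
      (diagonal (RCLike.ofReal ∘ hherm.eigenvalues) *
        (diagonal (RCLike.ofReal ∘ hherm.eigenvalues) *
          star (hherm.eigenvectorUnitary : Matrix (Fin N) (Fin N) ℂ))) := by
    conv_lhs => rw [hherm.spectral_theorem, Unitary.conjStarAlgAut_apply]
    simp only [mul_assoc]
    rw [hcancel]
  have htr2 : (σ * σ).trace = ∑ j, ((hherm.eigenvalues j : ℂ)) ^ 2 := by
    rw [hsq, ← mul_assoc, ← mul_assoc, Matrix.trace_mul_cycle, ← mul_assoc, hU, one_mul,
      diagonal_mul_diagonal, trace_diagonal]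
    simp [sq]
  -- the Frobenius norm squared equals trace (σᴴ * σ) = trace (σ * σ)
  have hfrob : ((∑ a, ∑ b, ‖σ a b‖ ^ 2 : ℝ) : ℂ) = (σ * σ).trace := by
    nth_rewrite 2 [← hherm.eq]
    simp only [Matrix.trace, Matrix.diag, Matrix.mul_apply, Matrix.conjTranspose_apply]
    push_cast
    rw [Finset.sum_comm]
    refine Finset.sum_congr rfl fun a _ => Finset.sum_congr rfl fun b _ => ?_
    rw [eq_comm]
    exact RCLike.conj_mul (σ b a)
  have hnn : ∀ j, 0 ≤ hherm.eigenvalues j := h.eigenvalues_nonneg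
  have hle : ∀ j, hherm.eigenvalues j ≤ 1 := by
    intro j
    calc hherm.eigenvalues j ≤ ∑ l, hherm.eigenvalues l :=
          Finset.single_le_sum (fun l _ => hnn l) (Finset.mem_univ j)
      _ = 1 := hsum1
  have h2 : ∑ j, (hherm.eigenvalues j) ^ 2 ≤ 1 := by
    calc ∑ j, (hherm.eigenvalues j) ^ 2 ≤ ∑ j, hherm.eigenvalues j :=
          Finset.sum_le_sum fun j _ => by
            rw [sq]
            calc hherm.eigenvalues j * hherm.eigenvalues j
                ≤ 1 * hherm.eigenvalues j := mul_le_mul_of_nonneg_right (hle j) (hnn j)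
              _ = hherm.eigenvalues j := one_mul _
      _ = 1 := hsum1
  have : ((∑ a, ∑ b, ‖σ a b‖ ^ 2 : ℝ) : ℂ) = ((∑ j, (hherm.eigenvalues j) ^ 2 : ℝ) : ℂ) := by
    rw [hfrob, htr2]; push_cast; ring
  have := Complex.ofReal_injective this
  rw [this]
  exact h2


theorem stmt_5 (NA NB : ℕ)
    (ρ : Matrix (Fin NA × Fin NB) (Fin NA × Fin NB) ℂ)
    (n : ℕ) (p : Fin n → ℝ)
    (ρA : Fin n → Matrix (Fin NA) (Fin NA) ℂ)
    (ρB : Fin n → Matrix (Fin NB) (Fin NB) ℂ)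
    (hp : ∀ i, 0 ≤ p i) (hpsum : ∑ i, p i = 1)
    (hA : ∀ i, (ρA i).PosSemidef ∧ (ρA i).trace = 1)
    (hB : ∀ i, (ρB i).PosSemidef ∧ (ρB i).trace = 1)
    (hsep : ρ = ∑ i, (p i : ℂ) • (ρA i ⊗ₖ ρB i)) :
    traceNorm (realign ρ) ≤ 1 := by
  classical
  set Bm : Matrix (Fin NA × Fin NA) (Fin n) ℂ :=
    Matrix.of fun q i => (Real.sqrt (p i) : ℂ) * ρA i q.1 q.2 with hBm
  set Cm : Matrix (Fin n) (Fin NB × Fin NB) ℂ :=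
    Matrix.of fun i q => (Real.sqrt (p i) : ℂ) * ρB i q.1 q.2 with hCm
  have hBC : realign ρ = Bm * Cm := by
    ext q r
    simp only [realign, hsep, Matrix.of_apply, Matrix.sum_apply, Matrix.smul_apply,
      Matrix.kroneckerMap_apply, Matrix.mul_apply, hBm, hCm, smul_eq_mul]
    refine Finset.sum_congr rfl fun i _ => ?_
    have : ((Real.sqrt (p i) : ℂ)) * ((Real.sqrt (p i) : ℂ)) = (p i : ℂ) := by
      rw [← Complex.ofReal_mul, Real.mul_self_sqrt (hp i)]
    ring_nf
    rw [pow_two, this]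
    ring
  rw [hBC]
  refine le_trans (traceNorm_mul_le Bm Cm) ?_
  have hSB : ∑ q, ∑ i, ‖Bm q i‖ ^ 2 ≤ 1 := by
    rw [Finset.sum_comm]
    have hfrobA : ∀ i, ∑ q : Fin NA × Fin NA, ‖ρA i q.1 q.2‖ ^ 2 ≤ 1 := by
      intro i
      rw [Fintype.sum_prod_type]
      exact frob_le_one (hA i).1 (hA i).2
    have hterm : ∀ i (q : Fin NA × Fin NA), ‖Bm q i‖ ^ 2 = p i * ‖ρA i q.1 q.2‖ ^ 2 := by
      intro i q
      simp only [hBm, Matrix.of_apply, norm_mul, mul_pow, Complex.norm_real,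
        Real.norm_eq_abs, sq_abs, Real.sq_sqrt (hp i)]
    calc ∑ i, ∑ q : Fin NA × Fin NA, ‖Bm q i‖ ^ 2
        = ∑ i, p i * ∑ q : Fin NA × Fin NA, ‖ρA i q.1 q.2‖ ^ 2 := by
          refine Finset.sum_congr rfl fun i _ => ?_
          rw [Finset.mul_sum]
          exact Finset.sum_congr rfl fun q _ => hterm i q
      _ ≤ ∑ i, p i * 1 := Finset.sum_le_sum fun i _ =>
          mul_le_mul_of_nonneg_left (hfrobA i) (hp i)
      _ = 1 := by simp [hpsum]
  have hSC : ∑ i, ∑ q, ‖Cm i q‖ ^ 2 ≤ 1 := by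
    have hfrobB : ∀ i, ∑ q : Fin NB × Fin NB, ‖ρB i q.1 q.2‖ ^ 2 ≤ 1 := by
      intro i
      rw [Fintype.sum_prod_type]
      exact frob_le_one (hB i).1 (hB i).2
    have hterm : ∀ i (q : Fin NB × Fin NB), ‖Cm i q‖ ^ 2 = p i * ‖ρB i q.1 q.2‖ ^ 2 := by
      intro i q
      simp only [hCm, Matrix.of_apply, norm_mul, mul_pow, Complex.norm_real,
        Real.norm_eq_abs, sq_abs, Real.sq_sqrt (hp i)]
    calc ∑ i, ∑ q : Fin NB × Fin NB, ‖Cm i q‖ ^ 2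
        = ∑ i, p i * ∑ q : Fin NB × Fin NB, ‖ρB i q.1 q.2‖ ^ 2 := by
          refine Finset.sum_congr rfl fun i _ => ?_
          rw [Finset.mul_sum]
          exact Finset.sum_congr rfl fun q _ => hterm i q
      _ ≤ ∑ i, p i * 1 := Finset.sum_le_sum fun i _ =>
          mul_le_mul_of_nonneg_left (hfrobB i) (hp i)
      _ = 1 := by simp [hpsum]
  calc Real.sqrt (∑ q, ∑ i, ‖Bm q i‖ ^ 2) * Real.sqrt (∑ i, ∑ q, ‖Cm i q‖ ^ 2)
      ≤ 1 * 1 := by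
        apply mul_le_mul ((Real.sqrt_le_one.mpr hSB)) ((Real.sqrt_le_one.mpr hSC))
          (Real.sqrt_nonneg _) (by norm_num)
    _ = 1 := by norm_num
end

section
/- Let T be a linear map on the real Hilbert space of Hermitian operators on a finite-dimensional Hilbert space H that is positive (maps positive semidefinite operators to positive semidefinite operators) and unitary with respect to the Hilbert–Schmidt inner product. Then T maps the cone of positive semidefinite operators onto itself, and its adjoint T† is also a positive map. -/
open Matrix
open scoped ComplexOrder

lemma psd_trace_nonneg {N : ℕ} {A : Matrix (Fin N) (Fin N) ℂ} (hA : A.PosSemidef) :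
    0 ≤ A.trace := by
  rw [Matrix.trace]
  apply Finset.sum_nonneg
  intro i _
  have := hA.dotProduct_mulVec_nonneg (Pi.single i 1)
  simpa [Matrix.mulVec, dotProduct, Pi.single_apply] using this

open scoped MatrixOrder in
lemma psd_mul_trace_nonneg {N : ℕ} {A B : Matrix (Fin N) (Fin N) ℂ}
    (hA : A.PosSemidef) (hB : B.PosSemidef) : 0 ≤ (A * B).trace := by
  have h1 : CFC.sqrt B * CFC.sqrt B = B := CFC.sqrt_mul_sqrt_self B hB.nonneg
  have h2 : (A * B).trace = (CFC.sqrt B * A * CFC.sqrt B).trace := by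
    rw [trace_mul_cycle, h1, trace_mul_comm]
  rw [h2]
  have hh : (CFC.sqrt B).conjTranspose = CFC.sqrt B := (CFC.sqrt_nonneg B).posSemidef.1
  have : ((CFC.sqrt B)ᴴ * A * CFC.sqrt B).PosSemidef := hA.conjTranspose_mul_mul_same _
  rw [hh] at this
  exact psd_trace_nonneg this

lemma psd_of_forall_trace {N : ℕ} {A : Matrix (Fin N) (Fin N) ℂ} (hA : A.IsHermitian)
    (h : ∀ P : Matrix (Fin N) (Fin N) ℂ, P.PosSemidef → 0 ≤ (A * P).trace) :
    A.PosSemidef := by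
  refine PosSemidef.of_dotProduct_mulVec_nonneg hA fun x => ?_
  have hP : (vecMulVec x (star x)).PosSemidef := by
    rw [vecMulVec_eq Unit]
    have : replicateRow Unit (star x) = (replicateCol Unit x)ᴴ := by
      ext i j; simp [replicateCol, replicateRow, conjTranspose]
    rw [this]
    exact posSemidef_self_mul_conjTranspose _
  have := h _ hP
  have heq : (A * vecMulVec x (star x)).trace = star x ⬝ᵥ A *ᵥ x := by
    simp only [Matrix.trace, Matrix.diag, Matrix.mul_apply, vecMulVec_apply,
      dotProduct, Matrix.mulVec, Pi.star_apply]
    congr 1; ext i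
    rw [Finset.mul_sum]
    congr 1; ext i
    ring
  rwa [heq] at this

lemma eq_zero_of_conjT_mul_self_trace {N : ℕ} {A : Matrix (Fin N) (Fin N) ℂ}
    (h : (Aᴴ * A).trace = 0) : A = 0 := by
  have hsum : ∑ i : Fin N, ∑ j : Fin N, star (A j i) * A j i = 0 := by
    simpa [Matrix.trace, Matrix.diag, Matrix.mul_apply, Matrix.conjTranspose_apply] using h
  have hz : ∀ i ∈ (Finset.univ : Finset (Fin N)), ∀ j ∈ (Finset.univ : Finset (Fin N)),
      star (A j i) * A j i = 0 := by
    have h1 := (Finset.sum_eq_zero_iff_of_nonneg (fun i _ =>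
      Finset.sum_nonneg (fun j _ => star_mul_self_nonneg (A j i)))).mp hsum
    intro i hi j hj
    exact (Finset.sum_eq_zero_iff_of_nonneg
      (fun j _ => star_mul_self_nonneg (A j i))).mp (h1 i hi) j hj
  ext i j
  have := hz j (Finset.mem_univ _) i (Finset.mem_univ _)
  rcases mul_eq_zero.mp this with h | h
  · simpa using congrArg star h
  · exact h

/-- Let `T` be a linear map on the real Hilbert space of Hermitian
operators on a finite-dimensional Hilbert space that is positive (maps positive
semidefinite operators to positive semidefinite operators) and unitary with respect to the
Hilbert–Schmidt inner product `⟨A,B⟩ = Tr(AB)`. Then `T` maps the cone of positive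
semidefinite operators onto itself, and its adjoint `T†` is also a positive map. -/
theorem stmt_9 (N : ℕ)
    (T : selfAdjoint (Matrix (Fin N) (Fin N) ℂ) →ₗ[ℝ]
      selfAdjoint (Matrix (Fin N) (Fin N) ℂ))
    (hpos : ∀ A : selfAdjoint (Matrix (Fin N) (Fin N) ℂ),
      ((A : Matrix (Fin N) (Fin N) ℂ)).PosSemidef →
      ((T A : Matrix (Fin N) (Fin N) ℂ)).PosSemidef)
    (hunit : ∀ A B : selfAdjoint (Matrix (Fin N) (Fin N) ℂ),
      ((T A : Matrix (Fin N) (Fin N) ℂ) * (T B : Matrix (Fin N) (Fin N) ℂ)).trace =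
      ((A : Matrix (Fin N) (Fin N) ℂ) * (B : Matrix (Fin N) (Fin N) ℂ)).trace) :
    (∀ B : selfAdjoint (Matrix (Fin N) (Fin N) ℂ),
      ((B : Matrix (Fin N) (Fin N) ℂ)).PosSemidef →
      ∃ A : selfAdjoint (Matrix (Fin N) (Fin N) ℂ),
        ((A : Matrix (Fin N) (Fin N) ℂ)).PosSemidef ∧ T A = B) ∧
    (∀ S : selfAdjoint (Matrix (Fin N) (Fin N) ℂ) →ₗ[ℝ]
        selfAdjoint (Matrix (Fin N) (Fin N) ℂ),
      (∀ A B : selfAdjoint (Matrix (Fin N) (Fin N) ℂ),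
        ((T A : Matrix (Fin N) (Fin N) ℂ) * (B : Matrix (Fin N) (Fin N) ℂ)).trace =
        ((A : Matrix (Fin N) (Fin N) ℂ) * (S B : Matrix (Fin N) (Fin N) ℂ)).trace) →
      ∀ B : selfAdjoint (Matrix (Fin N) (Fin N) ℂ),
        ((B : Matrix (Fin N) (Fin N) ℂ)).PosSemidef →
        ((S B : Matrix (Fin N) (Fin N) ℂ)).PosSemidef) := by
  haveI : FiniteDimensional ℝ (selfAdjoint (Matrix (Fin N) (Fin N) ℂ)) :=
    inferInstanceAs (FiniteDimensional ℝ (selfAdjoint.submodule ℝ (Matrix (Fin N) (Fin N) ℂ)))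
  constructor
  · -- surjectivity onto the cone
    have hinj : Function.Injective T := by
      rw [injective_iff_map_eq_zero]
      intro x hx
      have h0 := hunit x x
      rw [hx] at h0
      have : ((x : Matrix (Fin N) (Fin N) ℂ)ᴴ * (x : Matrix (Fin N) (Fin N) ℂ)).trace = 0 := by
        have hherm : (x : Matrix (Fin N) (Fin N) ℂ)ᴴ = (x : Matrix (Fin N) (Fin N) ℂ) := x.property
        rw [hherm, ← h0]
        simp
      have := eq_zero_of_conjT_mul_self_trace this
      exact Subtype.ext (by simpa using this)
    have hsurj : Function.Surjective T := (LinearMap.injective_iff_surjective).mp hinj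
    intro B hB
    obtain ⟨A, hA⟩ := hsurj B
    refine ⟨A, ?_, hA⟩
    apply psd_of_forall_trace A.property
    intro P hP
    have hPh : IsSelfAdjoint P := hP.1
    set P' : selfAdjoint (Matrix (Fin N) (Fin N) ℂ) := ⟨P, hPh⟩
    have h1 := hunit A P'
    rw [hA] at h1
    rw [← h1]
    exact psd_mul_trace_nonneg hB (hpos P' hP)
  · intro S hS B hB
    apply psd_of_forall_trace (S B).property
    intro P hP
    have hPh : IsSelfAdjoint P := hP.1
    set P' : selfAdjoint (Matrix (Fin N) (Fin N) ℂ) := ⟨P, hPh⟩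
    have h1 := hS P' B
    have h2 : (0:ℂ) ≤ ((T P' : Matrix (Fin N) (Fin N) ℂ) * (B : Matrix (Fin N) (Fin N) ℂ)).trace :=
      psd_mul_trace_nonneg (hpos P' hP) hB
    rw [h1] at h2
    rwa [trace_mul_comm] at h2
end

section
/- If T is a linear map on the real space of Hermitian operators on ℂ^N that is positive, trace-preserving, and orthogonal with respect to the Hilbert–Schmidt inner product, then its inverse T⁻¹ is also positive and trace-preserving. -/
open Matrix
open scoped ComplexOrder

lemma aux_trace_nonneg {n : Type*} [Fintype n] [DecidableEq n] {M : Matrix n n ℂ}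
    (hM : M.PosSemidef) : 0 ≤ M.trace := by
  have h : ∀ j, 0 ≤ M j j := by
    intro j
    have := (posSemidef_iff_dotProduct_mulVec.mp hM).2 (Pi.single j 1)
    simpa [dotProduct, mulVec, Pi.single_apply, Finset.mul_sum] using this
  exact Finset.sum_nonneg fun j _ => h j

lemma aux_trace_mul_nonneg {n : Type*} [Fintype n] [DecidableEq n]
    {A B : Matrix n n ℂ} (hA : A.PosSemidef) (hB : B.PosSemidef) :
    0 ≤ (A * B).trace := by
  obtain ⟨C, rfl⟩ : ∃ C : Matrix n n ℂ, A = Cᴴ * C :=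
    by open scoped MatrixOrder in exact CStarAlgebra.nonneg_iff_eq_star_mul_self.mp hA.nonneg
  have h1 : (Cᴴ * C * B).trace = (C * B * Cᴴ).trace := by
    rw [Matrix.mul_assoc, trace_mul_comm, Matrix.mul_assoc]
  rw [h1]
  have := hB.conjTranspose_mul_mul_same Cᴴ
  rw [conjTranspose_conjTranspose] at this
  exact aux_trace_nonneg this

lemma aux_frob_zero {n : Type*} [Fintype n] {A : Matrix n n ℂ}
    (h : (Aᴴ * A).trace = 0) : A = 0 := by
  have hdiag : ∀ j, (Aᴴ * A) j j = 0 := by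
    have hnn : ∀ j ∈ Finset.univ, (0:ℂ) ≤ (Aᴴ * A) j j := by
      intro j _
      simp only [Matrix.mul_apply, conjTranspose_apply]
      exact Finset.sum_nonneg fun i _ => star_mul_self_nonneg _
    intro j
    exact (Finset.sum_eq_zero_iff_of_nonneg hnn).mp h j (Finset.mem_univ j)
  ext i j
  have := hdiag j
  simp only [Matrix.mul_apply, conjTranspose_apply] at this
  have hz := (Finset.sum_eq_zero_iff_of_nonneg
    (fun i _ => star_mul_self_nonneg (A i j))).mp this i (Finset.mem_univ i)
  rcases mul_eq_zero.mp hz with h' | h'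
  · simpa using star_eq_zero.mp h'
  · simpa using h'

lemma aux_quadform_eq_trace {n : Type*} [Fintype n] (M : Matrix n n ℂ) (x : n → ℂ) :
    star x ⬝ᵥ (M *ᵥ x) = (M * vecMulVec x (star x)).trace := by
  simp only [dotProduct, mulVec, Matrix.trace, Matrix.mul_apply, vecMulVec_apply,
    Matrix.diag_apply, Pi.star_apply, Finset.mul_sum]
  exact Finset.sum_congr rfl fun i _ => Finset.sum_congr rfl fun j _ => by ring

lemma aux_vecMulVec_psd {n : Type*} [Fintype n] (x : n → ℂ) :
    (vecMulVec x (star x)).PosSemidef := by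
  have : vecMulVec x (star x) = replicateCol (Fin 1) x * (replicateCol (Fin 1) x)ᴴ := by
    rw [conjTranspose_replicateCol]; exact vecMulVec_eq (Fin 1) _ _
  rw [this]
  exact posSemidef_self_mul_conjTranspose _

/-- If `T` is a linear map on the real space of Hermitian operators on
`ℂ^N` that is positive, trace-preserving, and orthogonal with respect to the
Hilbert–Schmidt inner product `Tr(AB)`, then its inverse `T⁻¹` exists and is also positive
and trace-preserving. -/
theorem stmt_10 (N : ℕ)
    (T : selfAdjoint (Matrix (Fin N) (Fin N) ℂ) →ₗ[ℝ]
      selfAdjoint (Matrix (Fin N) (Fin N) ℂ))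
    (hpos : ∀ A : selfAdjoint (Matrix (Fin N) (Fin N) ℂ),
      ((A : Matrix (Fin N) (Fin N) ℂ)).PosSemidef →
      ((T A : Matrix (Fin N) (Fin N) ℂ)).PosSemidef)
    (htr : ∀ A : selfAdjoint (Matrix (Fin N) (Fin N) ℂ),
      ((T A : Matrix (Fin N) (Fin N) ℂ)).trace = ((A : Matrix (Fin N) (Fin N) ℂ)).trace)
    (horth : ∀ A B : selfAdjoint (Matrix (Fin N) (Fin N) ℂ),
      ((T A : Matrix (Fin N) (Fin N) ℂ) * (T B : Matrix (Fin N) (Fin N) ℂ)).trace =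
      ((A : Matrix (Fin N) (Fin N) ℂ) * (B : Matrix (Fin N) (Fin N) ℂ)).trace) :
    ∃ S : selfAdjoint (Matrix (Fin N) (Fin N) ℂ) →ₗ[ℝ]
      selfAdjoint (Matrix (Fin N) (Fin N) ℂ),
      (∀ A, S (T A) = A) ∧ (∀ A, T (S A) = A) ∧
      (∀ A : selfAdjoint (Matrix (Fin N) (Fin N) ℂ),
        ((A : Matrix (Fin N) (Fin N) ℂ)).PosSemidef →
        ((S A : Matrix (Fin N) (Fin N) ℂ)).PosSemidef) ∧
      (∀ A : selfAdjoint (Matrix (Fin N) (Fin N) ℂ),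
        ((S A : Matrix (Fin N) (Fin N) ℂ)).trace =
        ((A : Matrix (Fin N) (Fin N) ℂ)).trace) := by
  classical
  have hfd : FiniteDimensional ℝ (selfAdjoint (Matrix (Fin N) (Fin N) ℂ)) :=
    FiniteDimensional.finiteDimensional_submodule
      (selfAdjoint.submodule ℝ (Matrix (Fin N) (Fin N) ℂ))
  have hinj : Function.Injective T := by
    rw [← LinearMap.ker_eq_bot, LinearMap.ker_eq_bot']
    intro A hA
    have h0 : ((A : Matrix (Fin N) (Fin N) ℂ)ᴴ * (A : Matrix (Fin N) (Fin N) ℂ)).trace = 0 := by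
      have := horth A A
      rw [hA] at this
      have hherm : (A : Matrix (Fin N) (Fin N) ℂ)ᴴ = (A : Matrix (Fin N) (Fin N) ℂ) := A.prop
      rw [hherm]
      simpa using this.symm
    have := aux_frob_zero h0
    exact Subtype.ext (by simpa using this)
  have hsurj : Function.Surjective T := LinearMap.injective_iff_surjective.mp hinj
  let e : selfAdjoint (Matrix (Fin N) (Fin N) ℂ) ≃ₗ[ℝ] selfAdjoint (Matrix (Fin N) (Fin N) ℂ) :=
    LinearEquiv.ofBijective T ⟨hinj, hsurj⟩
  refine ⟨e.symm.toLinearMap, fun A => e.symm_apply_apply A, fun A => e.apply_symm_apply A, ?_, ?_⟩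
  · intro A hA
    refine posSemidef_iff_dotProduct_mulVec.mpr ⟨(e.symm A).prop, fun x => ?_⟩
    set M : Matrix (Fin N) (Fin N) ℂ := (e.symm A : Matrix (Fin N) (Fin N) ℂ)
    have hB := aux_vecMulVec_psd x
    set B : Matrix (Fin N) (Fin N) ℂ := vecMulVec x (star x)
    have hBsa : B ∈ selfAdjoint (Matrix (Fin N) (Fin N) ℂ) := hB.isHermitian
    have key : (M * B).trace = ((A : Matrix (Fin N) (Fin N) ℂ) * (T ⟨B, hBsa⟩ : Matrix (Fin N) (Fin N) ℂ)).trace := by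
      have h1 := horth (e.symm A) ⟨B, hBsa⟩
      have h2 : T (e.symm A) = A := e.apply_symm_apply A
      rw [h2] at h1
      exact h1.symm
    show 0 ≤ star x ⬝ᵥ M *ᵥ x
    rw [aux_quadform_eq_trace M x, key]
    exact aux_trace_mul_nonneg hA (hpos _ hB)
  · intro A
    have := htr (e.symm A)
    rw [show T (e.symm A) = A from e.apply_symm_apply A] at this
    exact this.symm
end

section
/- Suppose B = T(A) where T is a positive, injective linear map on Hermitian operators of a finite-dimensional Hilbert space that is orthogonal for the Hilbert–Schmidt inner product, and B is positive semidefinite. Then A is positive semidefinite. -/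
open Matrix
open scoped ComplexOrder

set_option linter.unusedVariables false

lemma psd_trace_nonneg_s11 {N : ℕ} {M : Matrix (Fin N) (Fin N) ℂ} (h : M.PosSemidef) :
    0 ≤ M.trace := by
  rw [Matrix.trace]
  apply Finset.sum_nonneg
  intro i _
  simpa [mulVec, dotProduct, Pi.single_apply, Finset.sum_ite_eq, Finset.sum_ite_eq'] using
    h.dotProduct_mulVec_nonneg (Pi.single i 1)

lemma psd_trace_mul_nonneg {N : ℕ} {M C : Matrix (Fin N) (Fin N) ℂ}
    (hM : M.PosSemidef) (hC : C.PosSemidef) : 0 ≤ (M * C).trace := by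
  open scoped MatrixOrder Matrix.Norms.L2Operator in
  obtain ⟨S, rfl⟩ := CStarAlgebra.nonneg_iff_eq_star_mul_self.mp hC.nonneg
  rw [← mul_assoc, trace_mul_comm, ← mul_assoc, star_eq_conjTranspose]
  exact psd_trace_nonneg_s11 (hM.mul_mul_conjTranspose_same _)

lemma vecMulVec_psd {N : ℕ} (x : Fin N → ℂ) : (vecMulVec x (star x)).PosSemidef := by
  refine .of_dotProduct_mulVec_nonneg ?_ ?_
  · ext i j
    simp [vecMulVec, conjTranspose_apply, mul_comm]
  · intro y
    have : star y ⬝ᵥ (vecMulVec x (star x)) *ᵥ y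
        = star (star x ⬝ᵥ y) * (star x ⬝ᵥ y) := by
      simp only [dotProduct, mulVec, vecMulVec, Matrix.of_apply, Pi.star_apply,
        Finset.mul_sum, Finset.sum_mul, star_sum, star_mul', starRingEnd_apply,
        star_star]
      rw [Finset.sum_comm]
      apply Finset.sum_congr rfl; intro i _
      apply Finset.sum_congr rfl; intro j _
      ring
    rw [this]
    exact star_mul_self_nonneg _

lemma trace_mul_vecMulVec {N : ℕ} (A : Matrix (Fin N) (Fin N) ℂ) (x : Fin N → ℂ) :
    (A * vecMulVec x (star x)).trace = star x ⬝ᵥ A *ᵥ x := by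
  simp only [trace, Matrix.mul_apply, vecMulVec, Matrix.of_apply, diag_apply,
    dotProduct, mulVec, Pi.star_apply, Finset.mul_sum]
  apply Finset.sum_congr rfl; intro i _
  apply Finset.sum_congr rfl; intro j _
  ring

/-- Suppose `B = T(A)` where `T` is a positive, injective linear map on
the Hermitian operators of a finite-dimensional Hilbert space that is orthogonal for the
Hilbert–Schmidt inner product `Tr(XY)`, and `B` is positive semidefinite. Then `A` is
positive semidefinite. -/
theorem stmt_11 (N : ℕ)
    (T : selfAdjoint (Matrix (Fin N) (Fin N) ℂ) →ₗ[ℝ]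
      selfAdjoint (Matrix (Fin N) (Fin N) ℂ))
    (hpos : ∀ X : selfAdjoint (Matrix (Fin N) (Fin N) ℂ),
      ((X : Matrix (Fin N) (Fin N) ℂ)).PosSemidef →
      ((T X : Matrix (Fin N) (Fin N) ℂ)).PosSemidef)
    (hinj : Function.Injective T)
    (horth : ∀ X Y : selfAdjoint (Matrix (Fin N) (Fin N) ℂ),
      ((T X : Matrix (Fin N) (Fin N) ℂ) * (T Y : Matrix (Fin N) (Fin N) ℂ)).trace =
      ((X : Matrix (Fin N) (Fin N) ℂ) * (Y : Matrix (Fin N) (Fin N) ℂ)).trace)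
    (A B : selfAdjoint (Matrix (Fin N) (Fin N) ℂ))
    (hTA : T A = B)
    (hBpsd : ((B : Matrix (Fin N) (Fin N) ℂ)).PosSemidef) :
    ((A : Matrix (Fin N) (Fin N) ℂ)).PosSemidef := by
  have hherm : ((A : Matrix (Fin N) (Fin N) ℂ)).IsHermitian := A.2
  refine .of_dotProduct_mulVec_nonneg hherm fun x => ?_
  set P : Matrix (Fin N) (Fin N) ℂ := vecMulVec x (star x) with hP
  have hPpsd := vecMulVec_psd x
  have hPmem : P ∈ selfAdjoint (Matrix (Fin N) (Fin N) ℂ) := hPpsd.1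
  set Ps : selfAdjoint (Matrix (Fin N) (Fin N) ℂ) := ⟨P, hPmem⟩ with hPs
  have h1 : ((A : Matrix (Fin N) (Fin N) ℂ) * P).trace
      = ((B : Matrix (Fin N) (Fin N) ℂ) * (T Ps : Matrix (Fin N) (Fin N) ℂ)).trace := by
    rw [← hTA, horth A Ps]
  have h2 : 0 ≤ ((B : Matrix (Fin N) (Fin N) ℂ) * (T Ps : Matrix (Fin N) (Fin N) ℂ)).trace :=
    psd_trace_mul_nonneg hBpsd (hpos Ps hPpsd)
  have := h1 ▸ h2
  rwa [trace_mul_vecMulVec] at this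
end

section
/- If a CPT map E : M_{N_B}(ℂ) → M_{N_A}(ℂ) is entanglement breaking and its matrix representation 𝓔 (on the standard operator bases) has full rank d = min(N_A², N_B²) with N_A = N_B, then det|𝓔| ≤ (N_B/d)^d, where |𝓔| = √(𝓔†𝓔); equivalently the volume-contraction rate of E is at most (N_B/d)^d. -/
open Matrix Kronecker
open scoped ComplexOrder

/-- Norm preservation for coisometries, coordinatewise. -/
lemma aux_norm {n : Type*} [Fintype n] [DecidableEq n] (M : Matrix n n ℂ)
    (h : Mᴴ * M = 1) (x : n → ℂ) :
    ∑ j, Complex.normSq ((M *ᵥ x) j) = ∑ p, Complex.normSq (x p) := by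
  have h1 : star (M *ᵥ x) ⬝ᵥ (M *ᵥ x) = star x ⬝ᵥ x := by
    rw [star_mulVec, dotProduct_mulVec, vecMul_vecMul, h, vecMul_one]
  have h2 : ∀ (z : n → ℂ), star z ⬝ᵥ z = ((∑ j, Complex.normSq (z j) : ℝ) : ℂ) := by
    intro z
    simp [dotProduct, Complex.normSq_eq_conj_mul_self]
  rw [h2, h2] at h1
  exact_mod_cast h1

/-- Frobenius norm squared of a PSD trace-one matrix is at most 1. -/
lemma aux_frob {n : Type*} [Fintype n] [DecidableEq n] {A : Matrix n n ℂ}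
    (hA : A.PosSemidef) (ht : A.trace = 1) :
    ∑ p : n × n, Complex.normSq (A p.1 p.2) ≤ 1 := by
  classical
  have hherm := hA.1
  set μ := hherm.eigenvalues with hμ
  have hspec := hherm.spectral_theorem
  simp only [Unitary.conjStarAlgAut_apply, Unitary.coe_star] at hspec
  set V : Matrix n n ℂ := (hherm.eigenvectorUnitary : Matrix n n ℂ) with hV
  have hVsV : star V * V = 1 := Unitary.coe_star_mul_self hherm.eigenvectorUnitary
  have htr : (A * A).trace = ((∑ j, μ j ^ 2 : ℝ) : ℂ) := by
    set D : Matrix n n ℂ := diagonal (RCLike.ofReal ∘ μ) with hD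
    have hAA : A * A = V * (D * D) * star V := by
      rw [hspec]; simp only [Matrix.mul_assoc]
      rw [← Matrix.mul_assoc (star V) V, hVsV, Matrix.one_mul]
    rw [hAA, trace_mul_comm, ← Matrix.mul_assoc, hVsV, Matrix.one_mul]
    simp [hD, diagonal_mul_diagonal, trace_diagonal, Function.comp]
    ring_nf
  have htr2 : (A * A).trace = ((∑ p : n × n, Complex.normSq (A p.1 p.2) : ℝ) : ℂ) := by
    rw [trace]
    push_cast
    rw [Fintype.sum_prod_type]
    congr 1; ext a
    rw [Matrix.diag, Matrix.mul_apply]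
    congr 1; ext b
    have : A b a = starRingEnd ℂ (A a b) := by
      conv_lhs => rw [← hherm]
      rfl
    rw [this, Complex.mul_conj]
  have key : ∑ p : n × n, Complex.normSq (A p.1 p.2) = ∑ j, μ j ^ 2 := by
    have := htr2.symm.trans htr
    exact_mod_cast this
  rw [key]
  have hsum : ∑ j, μ j = 1 := by
    have h1 : A.trace = ((∑ j, μ j : ℝ) : ℂ) := by
      conv_lhs => rw [hspec]
      rw [trace_mul_comm, ← Matrix.mul_assoc, hVsV, Matrix.one_mul]
      simp [trace_diagonal, Function.comp, hμ]
    rw [ht] at h1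
    exact_mod_cast h1.symm
  have hnn : ∀ j, 0 ≤ μ j := fun j => hA.eigenvalues_nonneg j
  calc ∑ j, μ j ^ 2 ≤ ∑ j, μ j * ∑ k, μ k := by
        refine Finset.sum_le_sum fun j _ => ?_
        rw [pow_two]
        exact mul_le_mul_of_nonneg_left
          (Finset.single_le_sum (fun k _ => hnn k) (Finset.mem_univ j)) (hnn j)
    _ = (∑ j, μ j) * (∑ k, μ k) := by rw [← Finset.sum_mul]
    _ = 1 := by rw [hsum]; ring

/-- Diagonal entry of `P * (x yᵀ) * Q`. -/
lemma aux_entry {n : Type*} [Fintype n] (P Q : Matrix n n ℂ) (x y : n → ℂ) (j : n) :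
    (P * vecMulVec x y * Q) j j = (P *ᵥ x) j * (Qᵀ *ᵥ y) j := by
  simp only [Matrix.mul_apply, vecMulVec_apply, mulVec, dotProduct, transpose_apply,
    Finset.sum_mul, Finset.mul_sum]
  refine Finset.sum_congr rfl fun p _ => Finset.sum_congr rfl fun q _ => ?_
  ring

/-- Cauchy–Schwarz for complex vectors, absolute-value form. -/
lemma aux_cs {n : Type*} [Fintype n] (u v : n → ℂ) :
    ∑ j, ‖u j‖ * ‖v j‖ ≤
      Real.sqrt (∑ j, Complex.normSq (u j)) * Real.sqrt (∑ j, Complex.normSq (v j)) := by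
  have h := Finset.sum_mul_sq_le_sq_mul_sq Finset.univ
    (fun j => ‖u j‖) (fun j => ‖v j‖)
  simp only [Complex.sq_norm] at h
  have hnn : 0 ≤ ∑ j, ‖u j‖ * ‖v j‖ :=
    Finset.sum_nonneg fun j _ => mul_nonneg (norm_nonneg _) (norm_nonneg _)
  calc ∑ j, ‖u j‖ * ‖v j‖
      = Real.sqrt ((∑ j, ‖u j‖ * ‖v j‖) ^ 2) := (Real.sqrt_sq hnn).symm
    _ ≤ Real.sqrt ((∑ j, Complex.normSq (u j)) * ∑ j, Complex.normSq (v j)) := Real.sqrt_le_sqrt h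
    _ = _ := Real.sqrt_mul (Finset.sum_nonneg fun j _ => Complex.normSq_nonneg _) _

/-- The map `E ⊗ I` acting on a bipartite matrix on `ℂ^{N_B} ⊗ ℂ^K`. -/
def tensorId {NA NB K : ℕ}
    (E : Matrix (Fin NB) (Fin NB) ℂ →ₗ[ℂ] Matrix (Fin NA) (Fin NA) ℂ)
    (M : Matrix (Fin NB × Fin K) (Fin NB × Fin K) ℂ) :
    Matrix (Fin NA × Fin K) (Fin NA × Fin K) ℂ :=
  Matrix.of fun p q => E (Matrix.of fun a b => M (a, p.2) (b, q.2)) p.1 q.1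

/-- A bipartite matrix is separable if it is a convex combination of (density-operator)
product states. -/
def IsSeparableState {NA K : ℕ}
    (M : Matrix (Fin NA × Fin K) (Fin NA × Fin K) ℂ) : Prop :=
  ∃ (n : ℕ) (p : Fin n → ℝ) (A : Fin n → Matrix (Fin NA) (Fin NA) ℂ)
    (B : Fin n → Matrix (Fin K) (Fin K) ℂ),
    (∀ i, 0 ≤ p i) ∧ (∑ i, p i) = 1 ∧
    (∀ i, (A i).PosSemidef ∧ (A i).trace = 1) ∧
    (∀ i, (B i).PosSemidef ∧ (B i).trace = 1) ∧
    M = ∑ i, (p i : ℂ) • (A i ⊗ₖ B i)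

/-- `E` is completely positive. -/
def IsCompletelyPositive {NA NB : ℕ}
    (E : Matrix (Fin NB) (Fin NB) ℂ →ₗ[ℂ] Matrix (Fin NA) (Fin NA) ℂ) : Prop :=
  ∀ (K : ℕ) (M : Matrix (Fin NB × Fin K) (Fin NB × Fin K) ℂ),
    M.PosSemidef → (tensorId E M).PosSemidef

/-- `E` is entanglement breaking: `E ⊗ I` maps every state to a separable state. -/
def IsEntanglementBreaking {NA NB : ℕ}
    (E : Matrix (Fin NB) (Fin NB) ℂ →ₗ[ℂ] Matrix (Fin NA) (Fin NA) ℂ) : Prop :=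
  ∀ (K : ℕ) (σ : Matrix (Fin NB × Fin K) (Fin NB × Fin K) ℂ),
    σ.PosSemidef → σ.trace = 1 → IsSeparableState (tensorId E σ)

/-- The matrix representation `𝓔_{(ij)(αβ)} = Tr((|i⟩⟨j|)ᴴ E(|α⟩⟨β|))` of a map on the
standard operator bases. -/
def matrixRep {NA NB : ℕ}
    (E : Matrix (Fin NB) (Fin NB) ℂ →ₗ[ℂ] Matrix (Fin NA) (Fin NA) ℂ) :
    Matrix (Fin NA × Fin NA) (Fin NB × Fin NB) ℂ :=
  Matrix.of fun p q => E (Matrix.single q.1 q.2 1) p.1 p.2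


/-- If a CPT map `E : M_{N}(ℂ) → M_{N}(ℂ)` (the case `N_A = N_B = N`) is
entanglement breaking and its matrix representation `𝓔` has full rank `d = N²`, then
`det|𝓔| ≤ (N/d)^d`, where `det|𝓔|` (the product of the singular values of `𝓔`, i.e. the
volume-contraction rate of `E`) is the product of the square roots of the eigenvalues of
`𝓔ᴴ𝓔`. -/
theorem stmt_18 (N : ℕ) (hN : 1 ≤ N)
    (E : Matrix (Fin N) (Fin N) ℂ →ₗ[ℂ] Matrix (Fin N) (Fin N) ℂ)
    (hcp : IsCompletelyPositive E)
    (htp : ∀ M, (E M).trace = M.trace)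
    (heb : IsEntanglementBreaking E)
    (hrank : (matrixRep E).rank = N ^ 2) :
    ∏ j, Real.sqrt
        ((Matrix.posSemidef_conjTranspose_mul_self (matrixRep E)).1.eigenvalues j) ≤
      ((N : ℝ) / (N ^ 2 : ℕ)) ^ (N ^ 2 : ℕ) := by
  classical
  have hNne : (N : ℂ) ≠ 0 := by
    simp only [ne_eq, Nat.cast_eq_zero]; omega
  -- the (normalized) maximally entangled state
  set φ : Fin N × Fin N → ℂ := fun p => if p.1 = p.2 then 1 else 0 with hφ
  set σ : Matrix (Fin N × Fin N) (Fin N × Fin N) ℂ :=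
    Matrix.of (fun p q => (N : ℂ)⁻¹ * (φ p * star (φ q))) with hσdef
  have hσpsd : σ.PosSemidef := by
    refine Matrix.PosSemidef.of_dotProduct_mulVec_nonneg ?_ ?_
    · ext p q
      simp only [hσdef, conjTranspose_apply, of_apply, star_mul', star_star, star_inv₀]
      rw [show star (N : ℂ) = (N : ℂ) by simp]
      ring
    · intro x
      have key : star x ⬝ᵥ (σ *ᵥ x)
          = (N:ℂ)⁻¹ * (star (star φ ⬝ᵥ x) * (star φ ⬝ᵥ x)) := by
        have expand : star x ⬝ᵥ (σ *ᵥ x)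
            = ∑ p, ∑ q, star (x p) * ((N:ℂ)⁻¹ * (φ p * star (φ q)) * x q) := by
          simp [hσdef, dotProduct, mulVec, Finset.mul_sum]
        rw [expand]
        simp only [dotProduct, star_sum, star_mul', star_star, Pi.star_apply,
          Finset.sum_mul_sum, Finset.mul_sum, Finset.sum_mul]
        rw [Finset.sum_comm]
        refine Finset.sum_congr rfl fun p _ => Finset.sum_congr rfl fun q _ => ?_
        ring
      rw [key]
      have h2 : (0:ℂ) ≤ (N : ℂ)⁻¹ := by
        rw [show ((N:ℂ))⁻¹ = ((N⁻¹ : ℝ) : ℂ) by push_cast; ring]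
        rw [Complex.le_def]
        simp [inv_nonneg]
      exact mul_nonneg h2 (star_mul_self_nonneg _)
  have hσtr : σ.trace = 1 := by
    simp only [hσdef, trace, diag_apply, of_apply]
    rw [← Finset.mul_sum]
    have : ∑ p : Fin N × Fin N, φ p * star (φ p) = (N : ℂ) := by
      rw [Fintype.sum_prod_type]
      simp [hφ, Finset.sum_ite_eq]
    rw [this, inv_mul_cancel₀ hNne]
  have hrel : ∀ a b j k : Fin N,
      matrixRep E ((a,b)) ((j,k)) = (N : ℂ) * tensorId E σ ((a,j)) ((b,k)) := by
    intro a b j k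
    have hmat : (Matrix.of fun c d => (N : ℂ)⁻¹ * (φ (c, j) * star (φ (d, k))))
        = (N : ℂ)⁻¹ • Matrix.single j k (1 : ℂ) := by
      ext c d
      simp only [of_apply, Matrix.smul_apply, smul_eq_mul, Matrix.single, hφ]
      by_cases h1 : j = c <;> by_cases h2 : k = d <;> simp [h1, h2, eq_comm]
    simp only [tensorId, matrixRep, hσdef, of_apply]
    rw [hmat, _root_.map_smul]
    simp only [Matrix.smul_apply, smul_eq_mul]
    rw [← mul_assoc, mul_inv_cancel₀ hNne, one_mul]
  -- separable decomposition of the Choi state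
  obtain ⟨n, p, A, B, hp, hpsum, hA, hB, hdec⟩ := heb N σ hσpsd hσtr
  set x : Fin n → (Fin N × Fin N) → ℂ := fun i pr => A i pr.1 pr.2 with hx
  set y : Fin n → (Fin N × Fin N) → ℂ := fun i pr => B i pr.1 pr.2 with hy
  set c : Fin n → ℝ := fun i => N * p i with hc
  have hcnn : ∀ i, 0 ≤ c i := fun i => mul_nonneg (Nat.cast_nonneg N) (hp i)
  have hcsum : ∑ i, c i = N := by
    rw [hc]; rw [← Finset.mul_sum, hpsum, mul_one]
  have h𝓜sum : matrixRep E = ∑ i, ((c i : ℝ) : ℂ) • vecMulVec (x i) (y i) := by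
    ext pr qr
    obtain ⟨a, b⟩ := pr
    obtain ⟨j, k⟩ := qr
    rw [hrel a b j k, hdec]
    simp only [Matrix.sum_apply, Matrix.smul_apply, smul_eq_mul, kroneckerMap_apply,
      vecMulVec_apply, hx, hy, hc, Finset.mul_sum]
    refine Finset.sum_congr rfl fun i _ => ?_
    push_cast
    ring
  -- spectral setup
  set 𝓜 : Matrix (Fin N × Fin N) (Fin N × Fin N) ℂ := matrixRep E with h𝓜
  have hH : (𝓜ᴴ * 𝓜).PosSemidef := Matrix.posSemidef_conjTranspose_mul_self 𝓜
  set ev : (Fin N × Fin N) → ℝ := hH.1.eigenvalues with hev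
  have hevnn : ∀ j, 0 ≤ ev j := fun j => hH.eigenvalues_nonneg j
  have hcard : Fintype.card (Fin N × Fin N) = N ^ 2 := by
    simp [Fintype.card_prod, sq]
  have hevpos : ∀ j, 0 < ev j := by
    intro j
    rcases (hevnn j).lt_or_eq with h | h
    · exact h
    · exfalso
      have hr : (𝓜ᴴ * 𝓜).rank = N ^ 2 := by
        rw [Matrix.rank_conjTranspose_mul_self]; exact hrank
      have hcard2 := hH.1.rank_eq_card_non_zero_eigs
      have hlt : Fintype.card {i // ev i ≠ 0} < Fintype.card (Fin N × Fin N) :=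
        Fintype.card_subtype_lt (x := j) (by simp [← h])
      rw [hr] at hcard2
      rw [← hcard2, hcard] at hlt
      exact lt_irrefl _ hlt
  set s : (Fin N × Fin N) → ℝ := fun j => Real.sqrt (ev j) with hs
  have hspos : ∀ j, 0 < s j := fun j => Real.sqrt_pos.mpr (hevpos j)
  have hs2 : ∀ j, s j * s j = ev j := fun j => Real.mul_self_sqrt (hevnn j)
  set V : Matrix (Fin N × Fin N) (Fin N × Fin N) ℂ := ((hH.1.eigenvectorUnitary : unitaryGroup (Fin N × Fin N) ℂ) : Matrix (Fin N × Fin N) (Fin N × Fin N) ℂ)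
    with hV
  have hVsV : star V * V = 1 := Unitary.coe_star_mul_self hH.1.eigenvectorUnitary
  have hVVs : V * star V = 1 := Matrix.mem_unitaryGroup_iff.mp hH.1.eigenvectorUnitary.2
  have hdiagH : star V * (𝓜ᴴ * 𝓜) * V = diagonal (RCLike.ofReal ∘ ev) :=
    by have := hH.1.conjStarAlgAut_star_eigenvectorUnitary
       rw [Unitary.conjStarAlgAut_star_apply] at this
       exact this
  set Dinv : Matrix (Fin N × Fin N) (Fin N × Fin N) ℂ :=
    diagonal (fun j => (((s j)⁻¹ : ℝ) : ℂ)) with hDinv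
  set W : Matrix (Fin N × Fin N) (Fin N × Fin N) ℂ := 𝓜 * V * Dinv with hW
  have hDinvstar : star Dinv = Dinv := by
    rw [hDinv, Matrix.star_eq_conjTranspose, diagonal_conjTranspose]
    have : (star fun j => (((s j)⁻¹ : ℝ) : ℂ)) = fun j => (((s j)⁻¹ : ℝ) : ℂ) := by
      funext j; simp
    rw [this]
  have hsW : star W = Dinv * (star V * 𝓜ᴴ) := by
    rw [hW, StarMul.star_mul, StarMul.star_mul, hDinvstar, Matrix.star_eq_conjTranspose 𝓜]
  have key1 : star W * W = 1 := by
    rw [hsW, hW]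
    have : Dinv * (star V * 𝓜ᴴ) * (𝓜 * V * Dinv)
        = Dinv * (star V * (𝓜ᴴ * 𝓜) * V) * Dinv := by
      simp only [Matrix.mul_assoc]
    rw [this, hdiagH, hDinv, diagonal_mul_diagonal, diagonal_mul_diagonal]
    ext i k
    by_cases hik : i = k
    · subst hik
      rw [diagonal_apply_eq, one_apply_eq]
      have hsne : (s i : ℝ) ≠ 0 := (hspos i).ne'
      simp only [Function.comp_apply]
      rw [show (RCLike.ofReal (ev i) : ℂ) = ((ev i : ℝ) : ℂ) from rfl, ← hs2 i]
      push_cast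
      field_simp
    · rw [diagonal_apply_ne _ hik, one_apply_ne hik]
  have key2 : star W * 𝓜 * V = diagonal (fun j => ((s j : ℝ) : ℂ)) := by
    rw [hsW]
    have : Dinv * (star V * 𝓜ᴴ) * 𝓜 * V = Dinv * (star V * (𝓜ᴴ * 𝓜) * V) := by
      simp only [Matrix.mul_assoc]
    rw [this, hdiagH, hDinv, diagonal_mul_diagonal]
    ext i k
    by_cases hik : i = k
    · subst hik
      rw [diagonal_apply_eq, diagonal_apply_eq]
      have hsne : (s i : ℝ) ≠ 0 := (hspos i).ne'
      simp only [Function.comp_apply]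
      rw [show (RCLike.ofReal (ev i) : ℂ) = ((ev i : ℝ) : ℂ) from rfl, ← hs2 i]
      push_cast
      field_simp
    · rw [diagonal_apply_ne _ hik, diagonal_apply_ne _ hik]
  
  have hWWs : W * star W = 1 := mul_eq_one_comm.mp key1
  -- diagonal entries expanded through the separable decomposition
  have hdiagj : ∀ j, ((s j : ℝ) : ℂ)
      = ∑ i, ((c i : ℝ) : ℂ) * ((star W *ᵥ x i) j * (Vᵀ *ᵥ y i) j) := by
    intro j
    have h0 : (star W * 𝓜 * V) j j = ((s j : ℝ) : ℂ) := by rw [key2, diagonal_apply_eq]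
    rw [← h0]
    calc (star W * 𝓜 * V) j j
        = ∑ i, (((c i : ℝ) : ℂ) • (star W * vecMulVec (x i) (y i) * V)) j j := by
          rw [h𝓜sum, Matrix.mul_sum, Matrix.sum_mul, Matrix.sum_apply]
          refine Finset.sum_congr rfl fun i _ => ?_
          rw [Matrix.mul_smul, Matrix.smul_mul]
      _ = ∑ i, ((c i : ℝ) : ℂ) * ((star W *ᵥ x i) j * (Vᵀ *ᵥ y i) j) := by
          refine Finset.sum_congr rfl fun i _ => ?_
          rw [Matrix.smul_apply, aux_entry, smul_eq_mul]
  -- Cauchy–Schwarz bound for each summand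
  have hbound : ∀ i, ∑ j, ‖(star W *ᵥ x i) j‖ * ‖(Vᵀ *ᵥ y i) j‖ ≤ 1 := by
    intro i
    have hxn : ∑ jj, Complex.normSq ((star W *ᵥ x i) jj) ≤ 1 := by
      have hco : (star W)ᴴ * star W = 1 := by
        have h1 : (star W)ᴴ = W := by
          rw [← Matrix.star_eq_conjTranspose, star_star]
        rw [h1]; exact hWWs
      rw [aux_norm (star W) hco (x i)]
      exact aux_frob (hA i).1 (hA i).2
    have hyn : ∑ jj, Complex.normSq ((Vᵀ *ᵥ y i) jj) ≤ 1 := by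
      have hco : (Vᵀ)ᴴ * Vᵀ = 1 := by
        have h1 : (Vᵀ)ᴴ = (star V)ᵀ := by
          ext a b
          simp [conjTranspose_apply, transpose_apply, Matrix.star_eq_conjTranspose]
        rw [h1, ← Matrix.transpose_mul, hVVs, Matrix.transpose_one]
      rw [aux_norm (Vᵀ) hco (y i)]
      exact aux_frob (hB i).1 (hB i).2
    calc ∑ j, ‖(star W *ᵥ x i) j‖ * ‖(Vᵀ *ᵥ y i) j‖
        ≤ Real.sqrt (∑ j, Complex.normSq ((star W *ᵥ x i) j)) *
            Real.sqrt (∑ j, Complex.normSq ((Vᵀ *ᵥ y i) j)) := aux_cs _ _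
      _ ≤ 1 * 1 := by
          refine mul_le_mul ?_ ?_ (Real.sqrt_nonneg _) zero_le_one
          · exact Real.sqrt_le_one.mpr hxn
          · exact Real.sqrt_le_one.mpr hyn
      _ = 1 := one_mul 1
  -- the trace-norm bound: ∑ singular values ≤ N
  have hS : ∑ j, s j ≤ (N : ℝ) := by
    have h1 : ((∑ j, s j : ℝ) : ℂ)
        = ∑ i, ((c i : ℝ) : ℂ) * ∑ j, ((star W *ᵥ x i) j * (Vᵀ *ᵥ y i) j) := by
      calc ((∑ j, s j : ℝ) : ℂ) = ∑ j, ((s j : ℝ) : ℂ) := by push_cast; rfl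
        _ = ∑ j, ∑ i, ((c i : ℝ) : ℂ) * ((star W *ᵥ x i) j * (Vᵀ *ᵥ y i) j) :=
            Finset.sum_congr rfl fun j _ => hdiagj j
        _ = ∑ i, ∑ j, ((c i : ℝ) : ℂ) * ((star W *ᵥ x i) j * (Vᵀ *ᵥ y i) j) :=
            Finset.sum_comm
        _ = ∑ i, ((c i : ℝ) : ℂ) * ∑ j, ((star W *ᵥ x i) j * (Vᵀ *ᵥ y i) j) := by
            simp [Finset.mul_sum]
    calc ∑ j, s j
        = Complex.re (∑ i, ((c i : ℝ) : ℂ) * ∑ j, ((star W *ᵥ x i) j * (Vᵀ *ᵥ y i) j)) := by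
          rw [← h1, Complex.ofReal_re]
      _ ≤ ‖∑ i, ((c i : ℝ) : ℂ) * ∑ j, ((star W *ᵥ x i) j * (Vᵀ *ᵥ y i) j)‖ :=
          Complex.re_le_norm _
      _ ≤ ∑ i, ‖((c i : ℝ) : ℂ) * ∑ j, ((star W *ᵥ x i) j * (Vᵀ *ᵥ y i) j)‖ :=
          norm_sum_le _ _
      _ ≤ ∑ i, c i * 1 := by
          refine Finset.sum_le_sum fun i _ => ?_
          rw [norm_mul]
          have habsc : ‖((c i : ℝ) : ℂ)‖ = c i := by
            rw [Complex.norm_real, Real.norm_eq_abs, abs_of_nonneg (hcnn i)]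
          rw [habsc]
          refine mul_le_mul_of_nonneg_left ?_ (hcnn i)
          calc ‖∑ j, ((star W *ᵥ x i) j * (Vᵀ *ᵥ y i) j)‖
              ≤ ∑ j, ‖(star W *ᵥ x i) j * (Vᵀ *ᵥ y i) j‖ :=
                norm_sum_le _ _
            _ = ∑ j, ‖(star W *ᵥ x i) j‖ * ‖(Vᵀ *ᵥ y i) j‖ := by
                simp [_root_.map_mul]
            _ ≤ 1 := hbound i
      _ = (N : ℝ) := by
          simp only [mul_one]
          exact hcsum
  -- AM–GM finish
  have hdne : ((N ^ 2 : ℕ) : ℝ) ≠ 0 := by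
    have : 0 < N ^ 2 := pow_pos (by omega) 2
    exact_mod_cast this.ne'
  have hsnn : ∀ j ∈ Finset.univ, (0:ℝ) ≤ s j := fun j _ => (hspos j).le
  have hw : ∑ _j : Fin N × Fin N, (((N ^ 2 : ℕ) : ℝ))⁻¹ = 1 := by
    rw [Finset.sum_const, Finset.card_univ, hcard, nsmul_eq_mul]
    rw [mul_inv_cancel₀ hdne]
  have hgm2 := Real.geom_mean_le_arith_mean_weighted Finset.univ
    (fun _ => (((N ^ 2 : ℕ) : ℝ))⁻¹) s (fun _ _ => by positivity) hw hsnn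
  have hprod : (∏ j, s j) ^ ((((N ^ 2 : ℕ) : ℝ))⁻¹) ≤ (N : ℝ) / ((N ^ 2 : ℕ) : ℝ) := by
    rw [← Real.finset_prod_rpow Finset.univ s hsnn]
    refine hgm2.trans ?_
    rw [← Finset.mul_sum]
    rw [div_eq_inv_mul]
    exact mul_le_mul_of_nonneg_left hS (by positivity)
  have hfinal : ∏ j, s j ≤ ((N : ℝ) / ((N ^ 2 : ℕ) : ℝ)) ^ (N ^ 2 : ℕ) := by
    have hpnn : (0:ℝ) ≤ ∏ j, s j := Finset.prod_nonneg hsnn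
    have h2 : ∏ j, s j = ((∏ j, s j) ^ ((((N ^ 2 : ℕ) : ℝ))⁻¹)) ^ (((N ^ 2 : ℕ) : ℝ)) := by
      rw [← Real.rpow_mul hpnn, inv_mul_cancel₀ hdne, Real.rpow_one]
    calc ∏ j, s j = ((∏ j, s j) ^ ((((N ^ 2 : ℕ) : ℝ))⁻¹)) ^ (((N ^ 2 : ℕ) : ℝ)) := h2
      _ ≤ ((N : ℝ) / ((N ^ 2 : ℕ) : ℝ)) ^ (((N ^ 2 : ℕ) : ℝ)) :=
          Real.rpow_le_rpow (Real.rpow_nonneg hpnn _) hprod (Nat.cast_nonneg _)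
      _ = ((N : ℝ) / ((N ^ 2 : ℕ) : ℝ)) ^ (N ^ 2 : ℕ) := Real.rpow_natCast _ _
  exact hfinal
end
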